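/- With δ as above (δ(w,z)² ≈ |Im⟨∂ρ(w), w−z⟩| + |w−z|² on bD × bD), the quasi-distance δ is quasi-symmetric: δ(w,z) ≈ δ(z,w) for w, z ∈ bD. -/
import Mathlib


open scoped BigOperators

private lemma stmt7_aux (a b K : ℝ) (ha : 0 ≤ a) (hb : 0 ≤ b) (hK : 0 ≤ K)
    (h : a ^ 2 ≤ K * b ^ 2) : a ≤ Real.sqrt K * b := by
  have h1 : a = Real.sqrt (a ^ 2) := by
    rw [Real.sqrt_sq ha]
  rw [h1]
  calc Real.sqrt (a ^ 2) ≤ Real.sqrt (K * b ^ 2) := Real.sqrt_le_sqrt h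
    _ = Real.sqrt K * b := by
        rw [Real.sqrt_mul hK, Real.sqrt_sq hb]

/-- Quasi-symmetry of the quasi-distance: with
`δ(w,z)² ≈ |Im⟨∂ρ(w), w−z⟩| + |w−z|²` on `bD × bD` and
`|Im⟨∂ρ(w), w−z⟩| = |Im⟨∂ρ(z), z−w⟩| + O(|w−z|²)`, one has `δ(w,z) ≈ δ(z,w)`. -/
theorem stmt7 (n : ℕ) (bD : Set (EuclideanSpace ℂ (Fin n)))
    (dρ : EuclideanSpace ℂ (Fin n) → EuclideanSpace ℂ (Fin n))
    (C₀ : ℝ) (him : ∀ w ∈ bD, ∀ z ∈ bD,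
      abs (|(∑ j, dρ w j * (w j - z j)).im| - |(∑ j, dρ z j * (z j - w j)).im|) ≤
        C₀ * ‖w - z‖ ^ 2)
    (δ : EuclideanSpace ℂ (Fin n) → EuclideanSpace ℂ (Fin n) → ℝ)
    (hδ0 : ∀ w z, 0 ≤ δ w z)
    (c₁ c₂ : ℝ) (hc₁ : 0 < c₁) (hc₂ : 0 < c₂)
    (hcomp : ∀ w ∈ bD, ∀ z ∈ bD,
      c₁ * (|(∑ j, dρ w j * (w j - z j)).im| + ‖w - z‖ ^ 2) ≤ δ w z ^ 2 ∧
        δ w z ^ 2 ≤ c₂ * (|(∑ j, dρ w j * (w j - z j)).im| + ‖w - z‖ ^ 2)) :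
    ∃ C : ℝ, 0 < C ∧ ∀ w ∈ bD, ∀ z ∈ bD,
      δ w z ≤ C * δ z w ∧ δ z w ≤ C * δ w z := by
  set K : ℝ := c₂ * (|C₀| + 1) / c₁ with hKdef
  have hK0 : 0 ≤ K := by positivity
  refine ⟨max 1 (Real.sqrt K), lt_of_lt_of_le one_pos (le_max_left _ _), ?_⟩
  have key : ∀ w ∈ bD, ∀ z ∈ bD, δ w z ≤ max 1 (Real.sqrt K) * δ z w := by
    intro w hw z hz
    set A := |(∑ j, dρ w j * (w j - z j)).im| with hA
    set B := |(∑ j, dρ z j * (z j - w j)).im| with hB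
    have hnorm : ‖z - w‖ = ‖w - z‖ := norm_sub_rev _ _
    have h1 : δ w z ^ 2 ≤ c₂ * (A + ‖w - z‖ ^ 2) := (hcomp w hw z hz).2
    have h2 : c₁ * (B + ‖z - w‖ ^ 2) ≤ δ z w ^ 2 := (hcomp z hz w hw).1
    have h3 : A - B ≤ |C₀| * ‖w - z‖ ^ 2 := by
      have := him w hw z hz
      have h4 : A - B ≤ |A - B| := le_abs_self _
      have h5 : C₀ * ‖w - z‖ ^ 2 ≤ |C₀| * ‖w - z‖ ^ 2 := by
        have : (0:ℝ) ≤ ‖w - z‖ ^ 2 := by positivity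
        exact mul_le_mul_of_nonneg_right (le_abs_self _) this
      linarith
    have hB0 : 0 ≤ B := abs_nonneg _
    have hsq : δ w z ^ 2 ≤ K * δ z w ^ 2 := by
      have hstep : δ w z ^ 2 ≤ c₂ * (|C₀| + 1) * (B + ‖z - w‖ ^ 2) := by
        rw [hnorm]
        have hlin : A + ‖w - z‖ ^ 2 ≤ (|C₀| + 1) * (B + ‖w - z‖ ^ 2) := by
          nlinarith [abs_nonneg C₀, sq_nonneg ‖w - z‖, mul_nonneg (abs_nonneg C₀) hB0]
        calc δ w z ^ 2 ≤ c₂ * (A + ‖w - z‖ ^ 2) := h1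
          _ ≤ c₂ * ((|C₀| + 1) * (B + ‖w - z‖ ^ 2)) :=
              mul_le_mul_of_nonneg_left hlin hc₂.le
          _ = c₂ * (|C₀| + 1) * (B + ‖w - z‖ ^ 2) := by ring
      have : c₂ * (|C₀| + 1) * (B + ‖z - w‖ ^ 2) ≤ K * δ z w ^ 2 := by
        rw [hKdef]
        rw [div_mul_eq_mul_div, le_div_iff₀ hc₁] at *
        calc c₂ * (|C₀| + 1) * (B + ‖z - w‖ ^ 2) * c₁
            = c₂ * (|C₀| + 1) * (c₁ * (B + ‖z - w‖ ^ 2)) := by ring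
          _ ≤ c₂ * (|C₀| + 1) * δ z w ^ 2 := by
              apply mul_le_mul_of_nonneg_left h2 (by positivity)
          _ = c₂ * (|C₀| + 1) * δ z w ^ 2 := rfl
      linarith
    calc δ w z ≤ Real.sqrt K * δ z w :=
          stmt7_aux _ _ _ (hδ0 w z) (hδ0 z w) hK0 hsq
      _ ≤ max 1 (Real.sqrt K) * δ z w :=
          mul_le_mul_of_nonneg_right (le_max_right _ _) (hδ0 z w)
  exact fun w hw z hz => ⟨key w hw z hz, key z hz w hw⟩
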